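/- arXiv:2204.12264 — 2 statements merged into one kernel-verified Lean document; each statement's English description precedes it below -/
import Mathlib

section
/- Fix channels h_1, …, h_K ∈ ℂ^N, noise powers σ_k² > 0, SINR thresholds τ_k > 0, sensing steering vectors a_1, …, a_M ∈ ℂ^N with gain thresholds Γ_m, power budget P_max > 0, ρ ∈ (0,1], and P_c > 0. Suppose PSD matrices V_0, V_1, …, V_K and reals t ≥ 0, u ≥ 0 satisfy all constraints of the reformulated problem (7): u ≥ (1/ρ)Σ_k Tr(V_k) + (1/ρ)Tr(V_0) + P_c; t·u ≤ Σ_k log₂(1 + γ'_k) with γ'_k = h_kᴴ V_k h_k / (Σ_{i=0, i≠k}^{K} h_kᴴ V_i h_k + σ_k²); h_kᴴ V_k h_k ≥ τ_k (Σ_{i=0, i≠k}^{K} h_kᴴ V_i h_k + σ_k²) for all k; Σ_k Tr(V_k) + Tr(V_0) ≤ P_max; a_mᴴ (Σ_k V_k + V_0) a_m ≥ Γ_m for all m; and each V_k (k = 1, …, K) has the form V_k = v_k v_kᴴ for some v_k ∈ ℂ^N. Then (v_1, …, v_K, V_0) is feasible for the original problem (6) — i.e. γ_k = |h_kᴴ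 v_k|² / (Σ_{i≠k} |h_kᴴ v_i|² + h_kᴴ V_0 h_k + σ_k²) ≥ τ_k, Σ_k ||v_k||² + Tr(V_0) ≤ P_max, and a_mᴴ (Σ_k v_k v_kᴴ + V_0) a_m ≥ Γ_m — and its objective value satisfies η'_EE = Σ_k log₂(1 + γ_k) / ((1/ρ)Σ_k ||v_k||² + (1/ρ)Tr(V_0) + P_c) ≥ t. -/
open Matrix Finset
open scoped ComplexOrder

/-- The real quadratic form of a complex matrix `V` at vector `x`: `xᴴ V x` (real part). -/
noncomputable def quadForm {N : ℕ} (V : Matrix (Fin N) (Fin N) ℂ) (x : Fin N → ℂ) : ℝ :=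
  (star x ⬝ᵥ V *ᵥ x).re

lemma quad_rank1 {N : ℕ} (v x : Fin N → ℂ) :
    quadForm (vecMulVec v (star v)) x = ‖star x ⬝ᵥ v‖ ^ 2 := by
  have h1 : star x ⬝ᵥ (vecMulVec v (star v)) *ᵥ x = (star x ⬝ᵥ v) * (star v ⬝ᵥ x) := by
    simp only [dotProduct, mulVec, vecMulVec_apply, Finset.mul_sum, Finset.sum_mul]
    rw [Finset.sum_comm]
    congr 1; ext i; congr 1; ext j; ring
  have h2 : star v ⬝ᵥ x = starRingEnd ℂ (star x ⬝ᵥ v) := by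
    simp [dotProduct, mul_comm]
  rw [quadForm, h1, h2, Complex.mul_conj]
  rw [Complex.ofReal_re, Complex.normSq_eq_norm_sq]

lemma trace_rank1 {N : ℕ} (v : Fin N → ℂ) :
    (Matrix.trace (vecMulVec v (star v))).re = ∑ i, ‖v i‖ ^ 2 := by
  simp [Matrix.trace, Matrix.diag, vecMulVec_apply, Complex.mul_conj, Complex.normSq_eq_norm_sq,
    ← Complex.ofReal_pow]

lemma quad_nonneg {N : ℕ} {V : Matrix (Fin N) (Fin N) ℂ} (hV : V.PosSemidef) (x : Fin N → ℂ) :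
    0 ≤ quadForm V x := by
  have := hV.dotProduct_mulVec_nonneg x
  exact (Complex.le_def.mp this).1

lemma trace_re_nonneg {N : ℕ} {V : Matrix (Fin N) (Fin N) ℂ} (hV : V.PosSemidef) :
    0 ≤ (Matrix.trace V).re := by
  rw [Matrix.trace, Complex.re_sum]
  refine Finset.sum_nonneg fun i _ => ?_
  have := quad_nonneg hV (Pi.single i 1)
  simpa [quadForm, dotProduct, mulVec, Pi.single_apply, Finset.mul_sum] using this

lemma erase_succ_sum {K : ℕ} (k : Fin K) (f : Fin (K + 1) → ℝ) :
    ∑ i ∈ Finset.univ.erase k.succ, f i = f 0 + ∑ i ∈ Finset.univ.erase k, f i.succ := by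
  have h1 := Finset.sum_erase_add Finset.univ f (Finset.mem_univ k.succ)
  have h2 := Finset.sum_erase_add Finset.univ (fun i => f i.succ) (Finset.mem_univ k)
  have h3 : ∑ i, f i = f 0 + ∑ i : Fin K, f i.succ := Fin.sum_univ_succ f
  linarith

/-- converse direction of Proposition 1: any feasible point of
the reformulated problem (7) whose communication covariances are rank-one outer
products `V_k = v_k v_kᴴ` yields a feasible point of the original problem (6)
with EE objective `η'_EE ≥ t`. -/
theorem reformulated_feasible_implies_original_feasible {N K M : ℕ}
    (h : Fin K → Fin N → ℂ) (σ2 τ : Fin K → ℝ)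
    (hσ : ∀ k, 0 < σ2 k) (hτ : ∀ k, 0 < τ k)
    (a : Fin M → Fin N → ℂ) (Γ : Fin M → ℝ)
    (Pmax ρ Pc : ℝ) (hPmax : 0 < Pmax) (hρ0 : 0 < ρ) (hρ1 : ρ ≤ 1) (hPc : 0 < Pc)
    (V : Fin (K + 1) → Matrix (Fin N) (Fin N) ℂ)
    (hVpsd : ∀ i, (V i).PosSemidef)
    (t u : ℝ) (ht0 : 0 ≤ t) (hu0 : 0 ≤ u)
    -- the SINRs of the reformulated problem
    (γ' : Fin K → ℝ)
    (hγ' : ∀ k, γ' k = quadForm (V k.succ) (h k) /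
      ((∑ i ∈ Finset.univ.erase k.succ, quadForm (V i) (h k)) + σ2 k))
    -- feasibility for the reformulated problem (7)
    (hu : u ≥ (1 / ρ) * (∑ k : Fin K, (Matrix.trace (V k.succ)).re) +
      (1 / ρ) * (Matrix.trace (V 0)).re + Pc)
    (htu : t * u ≤ ∑ k, Real.logb 2 (1 + γ' k))
    (hSINR' : ∀ k : Fin K, quadForm (V k.succ) (h k) ≥
      τ k * ((∑ i ∈ Finset.univ.erase k.succ, quadForm (V i) (h k)) + σ2 k))
    (hpow : (∑ k : Fin K, (Matrix.trace (V k.succ)).re) + (Matrix.trace (V 0)).re ≤ Pmax)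
    (hsens : ∀ m, quadForm ((∑ k : Fin K, V k.succ) + V 0) (a m) ≥ Γ m)
    -- the rank-one structure
    (v : Fin K → Fin N → ℂ)
    (hrank1 : ∀ k : Fin K, V k.succ = vecMulVec (v k) (star (v k)))
    -- the communication SINRs of the original problem
    (γ : Fin K → ℝ)
    (hγ : ∀ k, γ k = ‖star (h k) ⬝ᵥ v k‖ ^ 2 /
      ((∑ i ∈ Finset.univ.erase k, ‖star (h k) ⬝ᵥ v i‖ ^ 2) + quadForm (V 0) (h k) + σ2 k)) :
    -- feasibility of (v, V 0) for the original problem (6), and η'_EE ≥ t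
    (∀ k, γ k ≥ τ k) ∧
    ((∑ k, ∑ i, ‖v k i‖ ^ 2) + (Matrix.trace (V 0)).re ≤ Pmax) ∧
    (∀ m, quadForm ((∑ k, vecMulVec (v k) (star (v k))) + V 0) (a m) ≥ Γ m) ∧
    (∑ k, Real.logb 2 (1 + γ k)) /
      ((1 / ρ) * (∑ k, ∑ i, ‖v k i‖ ^ 2) + (1 / ρ) * (Matrix.trace (V 0)).re + Pc) ≥ t := by
  have hTrsum : (∑ k : Fin K, (Matrix.trace (V k.succ)).re) = ∑ k, ∑ i, ‖v k i‖ ^ 2 :=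
    Finset.sum_congr rfl fun k _ => by rw [hrank1 k, trace_rank1]
  have hquadk : ∀ k i : Fin K, quadForm (V i.succ) (h k) = ‖star (h k) ⬝ᵥ v i‖ ^ 2 :=
    fun k i => by rw [hrank1 i, quad_rank1]
  have hden : ∀ k : Fin K,
      (∑ i ∈ Finset.univ.erase k.succ, quadForm (V i) (h k)) + σ2 k =
      (∑ i ∈ Finset.univ.erase k, ‖star (h k) ⬝ᵥ v i‖ ^ 2) + quadForm (V 0) (h k) + σ2 k := by
    intro k
    rw [erase_succ_sum k (fun i => quadForm (V i) (h k)),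
      Finset.sum_congr rfl (fun i _ => hquadk k i)]
    ring
  have hγeq : ∀ k, γ k = γ' k := fun k => by rw [hγ k, hγ' k, hquadk k k, hden k]
  have hdenpos : ∀ k : Fin K,
      0 < (∑ i ∈ Finset.univ.erase k.succ, quadForm (V i) (h k)) + σ2 k := by
    intro k
    have h1 : 0 ≤ ∑ i ∈ Finset.univ.erase k.succ, quadForm (V i) (h k) :=
      Finset.sum_nonneg fun i _ => quad_nonneg (hVpsd i) (h k)
    linarith [hσ k]
  refine ⟨fun k => ?_, ?_, fun m => ?_, ?_⟩
  · rw [hγeq k, hγ' k, ge_iff_le, le_div_iff₀ (hdenpos k)]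
    have := hSINR' k
    linarith
  · rw [← hTrsum]; exact hpow
  · have hs : (∑ k : Fin K, V k.succ) = ∑ k, vecMulVec (v k) (star (v k)) :=
      Finset.sum_congr rfl fun k _ => hrank1 k
    rw [← hs]; exact hsens m
  · have hTr0 : 0 ≤ (Matrix.trace (V 0)).re := trace_re_nonneg (hVpsd 0)
    have hP0 : 0 ≤ ∑ k, ∑ i, ‖v k i‖ ^ 2 :=
      Finset.sum_nonneg fun k _ => Finset.sum_nonneg fun i _ => sq_nonneg _
    have hDpos : 0 < (1 / ρ) * (∑ k, ∑ i, ‖v k i‖ ^ 2) +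
        (1 / ρ) * (Matrix.trace (V 0)).re + Pc := by
      have h1 : 0 ≤ (1 / ρ) * (∑ k, ∑ i, ‖v k i‖ ^ 2) := by positivity
      have h2 : 0 ≤ (1 / ρ) * (Matrix.trace (V 0)).re := by positivity
      linarith
    have huD : (1 / ρ) * (∑ k, ∑ i, ‖v k i‖ ^ 2) +
        (1 / ρ) * (Matrix.trace (V 0)).re + Pc ≤ u := by
      rw [← hTrsum]; exact hu
    have hS : ∑ k, Real.logb 2 (1 + γ k) = ∑ k, Real.logb 2 (1 + γ' k) :=
      Finset.sum_congr rfl fun k _ => by rw [hγeq k]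
    rw [ge_iff_le, le_div_iff₀ hDpos, hS]
    calc t * _ ≤ t * u := mul_le_mul_of_nonneg_left huD ht0
      _ ≤ _ := htu
end

section
/- Fix channels h_1, …, h_K ∈ ℂ^N, noise powers σ_k² > 0, SINR thresholds τ_k > 0, steering vectors a_1, …, a_M ∈ ℂ^N with thresholds Γ_m, P_max > 0, ρ ∈ (0,1], P_c > 0, λ > 0, and linearization constants a_k ∈ ℝ (k = 1, …, K). Suppose PSD matrices Ṽ_0, Ṽ_1, …, Ṽ_K and reals t ≥ 0, u ≥ 0 satisfy: (i) u ≥ (1/ρ)Σ_k Tr(Ṽ_k) + (1/ρ)Tr(Ṽ_0) + P_c; (ii) the surrogate rate constraint (λ/2)t² + (1/(2λ))u² ≤ Σ_{k=1}^{K} [ log₂(Σ_{i=0}^{K} h_kᴴ Ṽ_i h_k + σ_k²) − a_k − (log₂ e / 2^{a_k}) · (Σ_{i=0, i≠k}^{K} h_kᴴ Ṽ_i h_k − c_k) ] for fixed constants c_k ∈ ℝ; (iii) h_kᴴ Ṽ_k h_k ≥ τ_k (Σ_{i=0, i≠k}^{K} h_kᴴ Ṽ_i h_k + σ_k²) for all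 k; (iv) Σ_k Tr(Ṽ_k) + Tr(Ṽ_0) ≤ P_max; (v) a_mᴴ (Σ_k Ṽ_k + Ṽ_0) a_m ≥ Γ_m for all m. Define v̂_k = (h_kᴴ Ṽ_k h_k)^{-1/2} · (Ṽ_k h_k), V̂_k = v̂_k v̂_kᴴ for k = 1, …, K, and V̂_0 = Σ_{k=1}^{K} Ṽ_k + Ṽ_0 − Σ_{k=1}^{K} V̂_k. Then: (a) every V̂_k (k = 0, 1, …, K) is PSD; (b) the point (V̂_0, …, V̂_K, t, u) satisfies all of the constraints (i)–(v) (with Ṽ replaced by V̂); and (c) rank(V̂_k) = 1 for every k = 1, …, K. -/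
open Matrix Finset
open scoped ComplexOrder

section Helpers
variable {N : ℕ}

lemma qf_nonneg {V : Matrix (Fin N) (Fin N) ℂ} (hV : V.PosSemidef) (x : Fin N → ℂ) :
    0 ≤ quadForm V x := hV.re_dotProduct_nonneg x

lemma dot_eq_qf {V : Matrix (Fin N) (Fin N) ℂ} (hV : V.PosSemidef) (x : Fin N → ℂ) :
    star x ⬝ᵥ V *ᵥ x = ((quadForm V x : ℝ) : ℂ) := by
  have h0 := hV.dotProduct_mulVec_nonneg x
  rw [Complex.le_def] at h0
  simp at h0
  apply Complex.ext <;> simp [quadForm, h0.2]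

lemma qf_add (A B : Matrix (Fin N) (Fin N) ℂ) (x : Fin N → ℂ) :
    quadForm (A + B) x = quadForm A x + quadForm B x := by
  simp [quadForm, add_mulVec, dotProduct_add]

lemma qf_sum {ι : Type*} (s : Finset ι) (f : ι → Matrix (Fin N) (Fin N) ℂ) (x : Fin N → ℂ) :
    quadForm (∑ i ∈ s, f i) x = ∑ i ∈ s, quadForm (f i) x := by
  classical
  induction s using Finset.induction with
  | empty => simp [quadForm]
  | insert _ _ hi ih => rw [Finset.sum_insert hi, Finset.sum_insert hi, qf_add, ih]

-- outer product mulVec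
lemma vmv_mulVec (v w x : Fin N → ℂ) :
    vecMulVec v w *ᵥ x = (w ⬝ᵥ x) • v := by
  ext i
  simp only [mulVec, vecMulVec_apply, dotProduct, Pi.smul_apply, smul_eq_mul, Finset.mul_sum]
  rw [Finset.sum_mul]
  exact Finset.sum_congr rfl fun j _ => by ring

lemma dot_outer (v x : Fin N → ℂ) :
    star x ⬝ᵥ (vecMulVec v (star v)) *ᵥ x = ((Complex.normSq (star x ⬝ᵥ v) : ℝ) : ℂ) := by
  rw [vmv_mulVec, dotProduct_smul, star_dotProduct, smul_eq_mul]
  simp [Complex.star_def, mul_comm, Complex.mul_conj]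

lemma qf_outer (v x : Fin N → ℂ) :
    quadForm (vecMulVec v (star v)) x = Complex.normSq (star x ⬝ᵥ v) := by
  simp [quadForm, dot_outer]

lemma outer_psd (v : Fin N → ℂ) : (vecMulVec v (star v)).PosSemidef := by
  refine Matrix.PosSemidef.of_dotProduct_mulVec_nonneg ?_ ?_
  · ext i j
    simp [conjTranspose_apply, vecMulVec_apply, mul_comm]
  · intro x
    rw [dot_outer]
    exact Complex.zero_le_real.mpr (Complex.normSq_nonneg _)

lemma herm_dot (V : Matrix (Fin N) (Fin N) ℂ) (hV : V.IsHermitian) (x y : Fin N → ℂ) :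
    star y ⬝ᵥ V *ᵥ x = star (star x ⬝ᵥ V *ᵥ y) := by
  rw [star_dotProduct]
  congr 1
  rw [star_mulVec, ← dotProduct_mulVec, hV.eq]

lemma cs_ineq {V : Matrix (Fin N) (Fin N) ℂ} (hV : V.PosSemidef) (hh x : Fin N → ℂ)
    (hQ : 0 < quadForm V hh) :
    Complex.normSq (star x ⬝ᵥ V *ᵥ hh) ≤ quadForm V x * quadForm V hh := by
  set Q : ℝ := quadForm V hh with hQdef
  set B : ℂ := star x ⬝ᵥ V *ᵥ hh with hB
  set y : Fin N → ℂ := (Q : ℂ) • x - (star B) • hh with hy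
  have h0 := hV.dotProduct_mulVec_nonneg y
  have hexp : star y ⬝ᵥ V *ᵥ y =
      ((Q ^ 2 * quadForm V x - Q * Complex.normSq B : ℝ) : ℂ) := by
    have hC : star hh ⬝ᵥ V *ᵥ x = star B := by
      rw [hB, herm_dot V hV.isHermitian x hh]
    rw [hy]
    simp only [star_sub, star_smul, mulVec_sub, mulVec_smul, sub_dotProduct,
      dotProduct_sub, smul_dotProduct, dotProduct_smul]
    rw [dot_eq_qf hV x, dot_eq_qf hV hh, ← hB, hC]
    simp only [smul_eq_mul, star_star, Complex.star_def, Complex.conj_ofReal, ← hQdef]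
    simp only [Complex.conj_conj, Complex.mul_conj]
    push_cast
    ring
  rw [hexp] at h0
  have h1 : (0:ℝ) ≤ Q ^ 2 * quadForm V x - Q * Complex.normSq B :=
    Complex.zero_le_real.mp h0
  nlinarith [hQ]

lemma dot_scaled {V : Matrix (Fin N) (Fin N) ℂ} (hV : V.PosSemidef) (hh : Fin N → ℂ)
    (hQ : 0 < quadForm V hh) (x : Fin N → ℂ) :
    Complex.normSq (star x ⬝ᵥ ((quadForm V hh ^ (-(1/2) : ℝ)) • (V *ᵥ hh))) =
      Complex.normSq (star x ⬝ᵥ (V *ᵥ hh)) / quadForm V hh := by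
  set Q : ℝ := quadForm V hh
  have hc : star x ⬝ᵥ ((Q ^ (-(1/2) : ℝ)) • (V *ᵥ hh)) =
      ((Q ^ (-(1/2) : ℝ) : ℝ) : ℂ) * (star x ⬝ᵥ (V *ᵥ hh)) := by
    rw [dotProduct_smul]
    simp [Complex.real_smul]
  rw [hc, Complex.normSq_mul, Complex.normSq_ofReal]
  have h2 : Q ^ (-(1/2) : ℝ) * Q ^ (-(1/2) : ℝ) = Q⁻¹ := by
    rw [← Real.rpow_add hQ]
    norm_num
    exact Real.rpow_neg_one Q
  rw [h2]
  ring

lemma qf_scaled_le {V : Matrix (Fin N) (Fin N) ℂ} (hV : V.PosSemidef) (hh : Fin N → ℂ)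
    (hQ : 0 < quadForm V hh) (x : Fin N → ℂ) :
    quadForm (vecMulVec ((quadForm V hh ^ (-(1/2) : ℝ)) • (V *ᵥ hh))
      (star ((quadForm V hh ^ (-(1/2) : ℝ)) • (V *ᵥ hh)))) x ≤ quadForm V x := by
  rw [qf_outer, dot_scaled hV hh hQ x]
  rw [div_le_iff₀ hQ]
  exact cs_ineq hV hh x hQ

lemma qf_scaled_eq {V : Matrix (Fin N) (Fin N) ℂ} (hV : V.PosSemidef) (hh : Fin N → ℂ)
    (hQ : 0 < quadForm V hh) :
    quadForm (vecMulVec ((quadForm V hh ^ (-(1/2) : ℝ)) • (V *ᵥ hh))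
      (star ((quadForm V hh ^ (-(1/2) : ℝ)) • (V *ᵥ hh)))) hh = quadForm V hh := by
  rw [qf_outer, dot_scaled hV hh hQ hh]
  rw [dot_eq_qf hV hh, Complex.normSq_ofReal]
  field_simp

lemma sub_outer_psd {V : Matrix (Fin N) (Fin N) ℂ} (hV : V.PosSemidef) (hh : Fin N → ℂ)
    (hQ : 0 < quadForm V hh) :
    (V - vecMulVec ((quadForm V hh ^ (-(1/2) : ℝ)) • (V *ᵥ hh))
      (star ((quadForm V hh ^ (-(1/2) : ℝ)) • (V *ᵥ hh)))).PosSemidef := by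
  set v := (quadForm V hh ^ (-(1/2) : ℝ)) • (V *ᵥ hh)
  refine Matrix.PosSemidef.of_dotProduct_mulVec_nonneg ?_ ?_
  · exact hV.isHermitian.sub (outer_psd v).isHermitian
  · intro x
    rw [sub_mulVec, dotProduct_sub, dot_eq_qf hV x, dot_outer]
    rw [← Complex.ofReal_sub]
    rw [Complex.zero_le_real, sub_nonneg, ← qf_outer]
    exact qf_scaled_le hV hh hQ x

lemma psd_sum {ι : Type*} (s : Finset ι) (f : ι → Matrix (Fin N) (Fin N) ℂ)
    (hf : ∀ i ∈ s, (f i).PosSemidef) : (∑ i ∈ s, f i).PosSemidef := by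
  classical
  induction s using Finset.induction with
  | empty => simpa using Matrix.PosSemidef.zero
  | insert _ _ hi ih =>
    rw [Finset.sum_insert hi]
    exact (hf _ (Finset.mem_insert_self _ _)).add
      (ih fun i hi' => hf i (Finset.mem_insert_of_mem hi'))

lemma rank_outer (v : Fin N → ℂ) (hv : v ≠ 0) : (vecMulVec v (star v)).rank = 1 := by
  have hle : (vecMulVec v (star v)).rank ≤ 1 := by
    rw [vecMulVec_eq (Fin 1)]
    exact le_trans (Matrix.rank_mul_le_left _ _)
      (by exact (by simpa using Matrix.rank_le_card_width (Matrix.replicateCol (Fin 1) v) :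
        (Matrix.replicateCol (Fin 1) v).rank ≤ 1))
  have hpos : 0 < (vecMulVec v (star v)).rank := by
    rw [Matrix.rank]
    have hvv : (vecMulVec v (star v)) *ᵥ v ≠ 0 := by
      rw [vmv_mulVec]
      have hdot : star v ⬝ᵥ v ≠ 0 := fun hcon =>
        hv (dotProduct_star_self_eq_zero.mp hcon)
      exact smul_ne_zero hdot hv
    have : Nontrivial (LinearMap.range (vecMulVec v (star v)).mulVecLin) := by
      refine ⟨⟨(vecMulVec v (star v)) *ᵥ v, LinearMap.mem_range_self _ v⟩, 0, ?_⟩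
      simp [Subtype.ext_iff, hvv]
    exact Module.finrank_pos
  omega
end Helpers


/-- Theorem 1 of the paper, tightness of the SDR: from any
feasible point `(Ṽ_0, …, Ṽ_K, t, u)` of the surrogate problem (13), the
construction `v̂_k = (h_kᴴ Ṽ_k h_k)^{-1/2} (Ṽ_k h_k)`, `V̂_k = v̂_k v̂_kᴴ`,
`V̂_0 = ∑_k Ṽ_k + Ṽ_0 − ∑_k V̂_k` yields PSD matrices satisfying all the
constraints of (13) with `rank(V̂_k) = 1` for `k = 1, …, K`. -/
theorem sdr_tightness {N K M : ℕ}
    (h : Fin K → Fin N → ℂ) (σ2 τ : Fin K → ℝ)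
    (hσ : ∀ k, 0 < σ2 k) (hτ : ∀ k, 0 < τ k)
    (a : Fin M → Fin N → ℂ) (Γ : Fin M → ℝ)
    (Pmax ρ Pc : ℝ) (hPmax : 0 < Pmax) (hρ0 : 0 < ρ) (hρ1 : ρ ≤ 1) (hPc : 0 < Pc)
    (lam : ℝ) (hlam : 0 < lam)
    (ak ck : Fin K → ℝ)
    (Vt : Fin (K + 1) → Matrix (Fin N) (Fin N) ℂ)
    (hVtpsd : ∀ i, (Vt i).PosSemidef)
    (t u : ℝ) (ht0 : 0 ≤ t) (hu0 : 0 ≤ u)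
    -- (i) power-consumption epigraph constraint
    (hi : u ≥ (1 / ρ) * (∑ k : Fin K, (Matrix.trace (Vt k.succ)).re) +
      (1 / ρ) * (Matrix.trace (Vt 0)).re + Pc)
    -- (ii) surrogate rate constraint
    (hii : (lam / 2) * t ^ 2 + (1 / (2 * lam)) * u ^ 2 ≤
      ∑ k : Fin K, (Real.logb 2 ((∑ i, quadForm (Vt i) (h k)) + σ2 k) - ak k -
        (Real.logb 2 (Real.exp 1) / (2 : ℝ) ^ (ak k)) *
          ((∑ i ∈ Finset.univ.erase k.succ, quadForm (Vt i) (h k)) - ck k)))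
    -- (iii) SINR constraints
    (hiii : ∀ k : Fin K, quadForm (Vt k.succ) (h k) ≥
      τ k * ((∑ i ∈ Finset.univ.erase k.succ, quadForm (Vt i) (h k)) + σ2 k))
    -- (iv) power budget constraint
    (hiv : (∑ k : Fin K, (Matrix.trace (Vt k.succ)).re) + (Matrix.trace (Vt 0)).re ≤ Pmax)
    -- (v) sensing constraints
    (hv : ∀ m, quadForm ((∑ k : Fin K, Vt k.succ) + Vt 0) (a m) ≥ Γ m)
    -- the rank-one construction
    (vhat : Fin K → Fin N → ℂ)
    (hvhat : ∀ k, vhat k = ((quadForm (Vt k.succ) (h k)) ^ (-(1/2) : ℝ)) • (Vt k.succ *ᵥ h k))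
    (Vh : Fin (K + 1) → Matrix (Fin N) (Fin N) ℂ)
    (hVh : Vh = Fin.cons
      ((∑ k : Fin K, Vt k.succ) + Vt 0 - ∑ k : Fin K, vecMulVec (vhat k) (star (vhat k)))
      (fun k => vecMulVec (vhat k) (star (vhat k)))) :
    -- (a) all constructed matrices are PSD
    (∀ i, (Vh i).PosSemidef) ∧
    -- (b) the constraints (i)–(v) hold with Ṽ replaced by V̂
    (u ≥ (1 / ρ) * (∑ k : Fin K, (Matrix.trace (Vh k.succ)).re) +
      (1 / ρ) * (Matrix.trace (Vh 0)).re + Pc) ∧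
    ((lam / 2) * t ^ 2 + (1 / (2 * lam)) * u ^ 2 ≤
      ∑ k : Fin K, (Real.logb 2 ((∑ i, quadForm (Vh i) (h k)) + σ2 k) - ak k -
        (Real.logb 2 (Real.exp 1) / (2 : ℝ) ^ (ak k)) *
          ((∑ i ∈ Finset.univ.erase k.succ, quadForm (Vh i) (h k)) - ck k))) ∧
    (∀ k : Fin K, quadForm (Vh k.succ) (h k) ≥
      τ k * ((∑ i ∈ Finset.univ.erase k.succ, quadForm (Vh i) (h k)) + σ2 k)) ∧
    ((∑ k : Fin K, (Matrix.trace (Vh k.succ)).re) + (Matrix.trace (Vh 0)).re ≤ Pmax) ∧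
    (∀ m, quadForm ((∑ k : Fin K, Vh k.succ) + Vh 0) (a m) ≥ Γ m) ∧
    -- (c) the communication covariances are rank one
    (∀ k : Fin K, (Vh k.succ).rank = 1) := by
  -- basic facts
  have hVh0 : Vh 0 = (∑ k : Fin K, Vt k.succ) + Vt 0
      - ∑ k : Fin K, vecMulVec (vhat k) (star (vhat k)) := by rw [hVh]; rfl
  have hVhs : ∀ k : Fin K, Vh k.succ = vecMulVec (vhat k) (star (vhat k)) := by
    intro k; rw [hVh]; exact Fin.cons_succ _ _ k
  have hQpos : ∀ k : Fin K, 0 < quadForm (Vt k.succ) (h k) := by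
    intro k
    have he : 0 ≤ ∑ i ∈ Finset.univ.erase k.succ, quadForm (Vt i) (h k) :=
      Finset.sum_nonneg fun i _ => qf_nonneg (hVtpsd i) (h k)
    have := hiii k
    nlinarith [hτ k, hσ k]
  have hWpsd : ∀ k : Fin K, (vecMulVec (vhat k) (star (vhat k))).PosSemidef :=
    fun k => outer_psd _
  have hqfW : ∀ k : Fin K, quadForm (Vh k.succ) (h k) = quadForm (Vt k.succ) (h k) := by
    intro k
    rw [hVhs k, hvhat k]
    exact qf_scaled_eq (hVtpsd k.succ) (h k) (hQpos k)
  -- sum preservation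
  have hsum : ∑ i : Fin (K + 1), Vh i = ∑ i : Fin (K + 1), Vt i := by
    rw [Fin.sum_univ_succ, Fin.sum_univ_succ, hVh0]
    simp only [hVhs]
    abel
  have hsum' : (∑ k : Fin K, Vh k.succ) + Vh 0 = (∑ k : Fin K, Vt k.succ) + Vt 0 := by
    have h1 : ∀ (W : Fin (K+1) → Matrix (Fin N) (Fin N) ℂ),
        (∑ k : Fin K, W k.succ) + W 0 = ∑ i : Fin (K + 1), W i := by
      intro W; rw [Fin.sum_univ_succ]; abel
    rw [h1 Vh, h1 Vt, hsum]
  -- quadForm sum preservation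
  have hqtot : ∀ (x : Fin N → ℂ),
      ∑ i : Fin (K+1), quadForm (Vh i) x = ∑ i : Fin (K+1), quadForm (Vt i) x := by
    intro x
    rw [← qf_sum, ← qf_sum, hsum]
  have hqer : ∀ k : Fin K,
      ∑ i ∈ Finset.univ.erase k.succ, quadForm (Vh i) (h k) =
      ∑ i ∈ Finset.univ.erase k.succ, quadForm (Vt i) (h k) := by
    intro k
    have e1 := Finset.add_sum_erase Finset.univ (fun i => quadForm (Vh i) (h k))
      (Finset.mem_univ k.succ)
    have e2 := Finset.add_sum_erase Finset.univ (fun i => quadForm (Vt i) (h k))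
      (Finset.mem_univ k.succ)
    have := hqtot (h k)
    have hk := hqfW k
    linarith
  -- trace preservation
  have htr : (∑ k : Fin K, (Matrix.trace (Vh k.succ)).re) + (Matrix.trace (Vh 0)).re =
      (∑ k : Fin K, (Matrix.trace (Vt k.succ)).re) + (Matrix.trace (Vt 0)).re := by
    have := congrArg (fun A => (Matrix.trace A).re) hsum
    simpa [Fin.sum_univ_succ, Matrix.trace_sum, Complex.re_sum, add_comm] using this
  -- PSD of Vh 0
  have hpsd0 : (Vh 0).PosSemidef := by
    have hdecomp : Vh 0 = Vt 0 + ∑ k : Fin K,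
        (Vt k.succ - vecMulVec (vhat k) (star (vhat k))) := by
      rw [hVh0, Finset.sum_sub_distrib]
      abel
    rw [hdecomp]
    refine Matrix.PosSemidef.add (hVtpsd 0) (psd_sum _ _ fun k _ => ?_)
    rw [hvhat k]
    exact sub_outer_psd (hVtpsd k.succ) (h k) (hQpos k)
  have hpsd : ∀ i, (Vh i).PosSemidef := by
    intro i
    induction i using Fin.cases with
    | zero => exact hpsd0
    | succ k => rw [hVhs k]; exact hWpsd k
  refine ⟨hpsd, ?_, ?_, ?_, ?_, ?_, ?_⟩
  · linarith [hi, htr,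
      mul_le_mul_of_nonneg_left (le_of_eq htr) (le_of_lt (one_div_pos.mpr hρ0))]
  · refine le_trans hii (le_of_eq ?_)
    exact (Finset.sum_congr rfl fun k _ => by rw [hqtot (h k), hqer k]).symm
  · intro k
    rw [hqfW k, hqer k]
    exact hiii k
  · linarith [hiv, htr]
  · intro m
    rw [hsum']
    exact hv m
  · intro k
    rw [hVhs k]
    apply rank_outer
    intro hcon
    have : quadForm (Vh k.succ) (h k) = 0 := by
      have hz : vecMulVec (0 : Fin N → ℂ) (star (0 : Fin N → ℂ)) = 0 := by
        ext i j; simp [vecMulVec_apply]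
      rw [hVhs k, hcon, hz]
      simp [quadForm]
    rw [hqfW k] at this
    exact absurd this (ne_of_gt (hQpos k))
end
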